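/- Let κ be a finite index set, let γ be a type with decidable equality, and let λ : κ → ℝ be nonnegative weights. Then the weighted Hamming distance kernel K_cat : (κ → γ) × (κ → γ) → ℝ defined by K_cat(s, t) = exp( ∑_{l ∈ κ} (−λ_l · [s_l ≠ t_l]) ), where [s_l ≠ t_l] is 1 if s_l ≠ t_l and 0 otherwise, is a positive definite kernel on κ → γ. -/
import Mathlib

/-- A positive definite kernel on a type `X`: symmetric and positive definite. -/
def IsPosDefKernel {X : Type*} (k : X × X → ℝ) : Prop :=
  (∀ x y : X, k (x, y) = k (y, x)) ∧
  ∀ (n : ℕ) (x : Fin n → X) (c : Fin n → ℝ),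
    0 ≤ ∑ i, ∑ j, c i * c j * k (x i, x j)

/-- The equality-indicator kernel is positive semidefinite (sum of squares). -/
lemma eq_kernel_pd {Z : Type*} [DecidableEq Z] {n : ℕ} (g : Fin n → Z) (c : Fin n → ℝ) :
    0 ≤ ∑ i, ∑ j, c i * c j * (if g i = g j then (1 : ℝ) else 0) := by
  classical
  set F : Z → ℝ := fun v => ∑ j ∈ Finset.univ.filter (fun j => g j = v), c j with hF
  have h1 : ∀ i, ∑ j, c i * c j * (if g i = g j then (1 : ℝ) else 0) = c i * F (g i) := by
    intro i
    show _ = c i * ∑ j ∈ Finset.univ.filter (fun j => g j = g i), c j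
    rw [Finset.mul_sum, Finset.sum_filter]
    apply Finset.sum_congr rfl
    intro j _
    by_cases h : g j = g i
    · simp [h]
    · have h' : ¬ g i = g j := fun e => h e.symm
      simp [h, h']
  calc ∑ i, ∑ j, c i * c j * (if g i = g j then (1 : ℝ) else 0)
      = ∑ i, c i * F (g i) := Finset.sum_congr rfl fun i _ => h1 i
    _ = ∑ v ∈ Finset.univ.image g, ∑ i ∈ Finset.univ.filter (fun i => g i = v),
          c i * F (g i) := by
        rw [Finset.sum_fiberwise_of_maps_to (fun i _ => Finset.mem_image_of_mem g
          (Finset.mem_univ i))]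
    _ = ∑ v ∈ Finset.univ.image g, F v * F v := by
        apply Finset.sum_congr rfl
        intro v _
        have h2 : ∀ i ∈ Finset.univ.filter (fun i => g i = v), c i * F (g i) = c i * F v := by
          intro i hi
          rw [(Finset.mem_filter.mp hi).2]
        rw [Finset.sum_congr rfl h2, ← Finset.sum_mul]
    _ ≥ 0 := Finset.sum_nonneg fun v _ => mul_self_nonneg _

/-- The weighted Hamming distance kernel `K_cat` with nonnegative weights is a
positive definite kernel on `κ → γ`. -/
theorem kCat_isPosDefKernel {κ γ : Type*} [Fintype κ] [DecidableEq γ]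
    (lam : κ → ℝ) (hlam : ∀ l, 0 ≤ lam l) :
    IsPosDefKernel (fun p : (κ → γ) × (κ → γ) =>
      Real.exp (∑ l, (-(lam l) * (if p.1 l ≠ p.2 l then (1 : ℝ) else 0)))) := by
  classical
  constructor
  · intro x y
    show Real.exp (∑ l, (-(lam l) * (if x l ≠ y l then (1 : ℝ) else 0)))
        = Real.exp (∑ l, (-(lam l) * (if y l ≠ x l then (1 : ℝ) else 0)))
    congr 1
    apply Finset.sum_congr rfl
    intro l _
    exact congrArg (fun z => -(lam l) * z) (if_congr ne_comm (by rfl) (by rfl))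
  · intro n x c
    show 0 ≤ ∑ i, ∑ j, c i * c j *
        Real.exp (∑ l, (-(lam l) * (if x i l ≠ x j l then (1 : ℝ) else 0)))
    set a : κ → ℝ := fun l => Real.exp (-(lam l)) with ha
    have ha0 : ∀ l, 0 < a l := fun l => Real.exp_pos _
    have ha1 : ∀ l, a l ≤ 1 := by
      intro l
      rw [ha]
      exact Real.exp_le_one_iff.mpr (neg_nonpos.mpr (hlam l))
    set W : Finset κ → ℝ := fun T => (∏ l ∈ T, a l) * ∏ l ∈ Finset.univ \ T, (1 - a l)
      with hW
    have hWnn : ∀ T, 0 ≤ W T := by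
      intro T
      apply mul_nonneg
      · exact Finset.prod_nonneg fun l _ => (ha0 l).le
      · exact Finset.prod_nonneg fun l _ => by linarith [ha1 l]
    set δ : Finset κ → (κ → γ) → (κ → γ) → ℝ := fun T s t =>
      if ∀ l ∈ Finset.univ \ T, s l = t l then (1 : ℝ) else 0 with hδ
    -- rewrite kernel value as a sum over subsets
    have hK : ∀ s t : κ → γ,
        Real.exp (∑ l, (-(lam l) * (if s l ≠ t l then (1 : ℝ) else 0)))
        = ∑ T ∈ (Finset.univ : Finset κ).powerset, W T * δ T s t := by
      intro s t
      have step1 : Real.exp (∑ l, (-(lam l) * (if s l ≠ t l then (1 : ℝ) else 0)))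
          = ∏ l, (a l + (1 - a l) * (if s l = t l then (1 : ℝ) else 0)) := by
        rw [Real.exp_sum]
        apply Finset.prod_congr rfl
        intro l _
        by_cases h : s l = t l
        · simp [h]
        · simp [h, ha]
      rw [step1, Finset.prod_add]
      apply Finset.sum_congr rfl
      intro T _
      rw [Finset.prod_mul_distrib, Finset.prod_boole, hW, hδ]
      ring_nf
    have key : ∑ i, ∑ j, c i * c j *
        Real.exp (∑ l, (-(lam l) * (if x i l ≠ x j l then (1 : ℝ) else 0)))
        = ∑ T ∈ (Finset.univ : Finset κ).powerset,
            W T * ∑ i, ∑ j, c i * c j * δ T (x i) (x j) := by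
      calc ∑ i, ∑ j, c i * c j *
            Real.exp (∑ l, (-(lam l) * (if x i l ≠ x j l then (1 : ℝ) else 0)))
          = ∑ i, ∑ j, ∑ T ∈ (Finset.univ : Finset κ).powerset,
              W T * (c i * c j * δ T (x i) (x j)) := by
            apply Finset.sum_congr rfl; intro i _
            apply Finset.sum_congr rfl; intro j _
            rw [hK, Finset.mul_sum]
            exact Finset.sum_congr rfl fun T _ => by ring
        _ = ∑ i, ∑ T ∈ (Finset.univ : Finset κ).powerset, ∑ j,
              W T * (c i * c j * δ T (x i) (x j)) :=
            Finset.sum_congr rfl fun i _ => Finset.sum_comm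
        _ = ∑ T ∈ (Finset.univ : Finset κ).powerset, ∑ i, ∑ j,
              W T * (c i * c j * δ T (x i) (x j)) := Finset.sum_comm
        _ = ∑ T ∈ (Finset.univ : Finset κ).powerset,
              W T * ∑ i, ∑ j, c i * c j * δ T (x i) (x j) := by
            apply Finset.sum_congr rfl; intro T _
            rw [Finset.mul_sum]
            exact Finset.sum_congr rfl fun i _ => by rw [Finset.mul_sum]
    rw [key]
    apply Finset.sum_nonneg
    intro T _
    apply mul_nonneg (hWnn T)
    -- positive semidefiniteness of the equality indicator on coordinates in univ \ T
    set g : Fin n → (κ → Option γ) := fun i l =>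
      if l ∈ Finset.univ \ T then some (x i l) else none with hg
    have hcond : ∀ i j : Fin n,
        δ T (x i) (x j) = (if g i = g j then (1 : ℝ) else 0) := by
      intro i j
      have hiff : (∀ l ∈ Finset.univ \ T, x i l = x j l) ↔ g i = g j := by
        constructor
        · intro h
          funext l
          by_cases hl : l ∈ Finset.univ \ T
          · have hlT : l ∉ T := (Finset.mem_sdiff.mp hl).2
            simp [hg, hlT, h l hl]
          · have hlT : l ∈ T := by
              by_contra hT
              exact hl (Finset.mem_sdiff.mpr ⟨Finset.mem_univ l, hT⟩)
            simp [hg, hlT]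
        · intro h l hl
          have hlT : l ∉ T := (Finset.mem_sdiff.mp hl).2
          have h2 := congrFun h l
          simpa [hg, hlT] using h2
      rw [hδ]
      simp only [hiff]
    simp only [hcond]
    exact eq_kernel_pd g c
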